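/- Let a ∈ C¹([0,1]) with a > 0, and f ∈ C¹([0,∞)) satisfy (f_eq), (f_sgn) and (f_ap)'. Then there exists a constant M > 0, depending only on a, f and u0 (not on n), such that for every n ∈ ℕ, every classical solution u of (P_n) with 0 < min_{[0,1]} u < u0 satisfies ‖u‖_{W^{1,1}(0,1)} = ∫₀¹ |u| dx + ∫₀¹ |u'| dx ≤ M. -/

import Mathlib

open Set MeasureTheory Filter Topology

noncomputable section

/-- `φ(s) = s / √(1+s²)`. -/
def phi (s : ℝ) : ℝ := s / Real.sqrt (1 + s ^ 2)

/-- `φ'(s) = (1+s²)^(-3/2)`. -/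
def phiD (s : ℝ) : ℝ := 1 / (Real.sqrt (1 + s ^ 2)) ^ 3

/-- the inverse of `φ`, a bijection of `(-1,1)` onto `ℝ`. -/
def phiInv (y : ℝ) : ℝ := y / Real.sqrt (1 - y ^ 2)

/-- the approximation `φₙ`: equal to `φ` on `[-n,n]`, affine outside. -/
def phiN (n : ℕ) (s : ℝ) : ℝ :=
  if (n : ℝ) < s then phi n + phiD n * (s - n)
  else if s < -(n : ℝ) then -phi n + phiD n * (s + n)
  else phi s

/-- `Φ(s) = √(1+s²) - 1`. -/
def PhiBig (s : ℝ) : ℝ := Real.sqrt (1 + s ^ 2) - 1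

/-- `Φₙ(s) = ∫₀ˢ φₙ`. -/
def PhiNBig (n : ℕ) (s : ℝ) : ℝ := ∫ t in (0:ℝ)..s, phiN n t

/-- the extension `f̂` of `f` vanishing on the negatives. -/
def fhat (f : ℝ → ℝ) (s : ℝ) : ℝ := if s < 0 then 0 else f s

/-- `F(s) = ∫_{u0}^s f`. -/
def Fprim (f : ℝ → ℝ) (u0 s : ℝ) : ℝ := ∫ t in u0..s, f t

/-- assumption `(f_eq)`. -/
def Feq (f : ℝ → ℝ) (u0 : ℝ) : Prop := f 0 = 0 ∧ f u0 = 0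

/-- assumption `(f_sgn)`. -/
def Fsgn (f : ℝ → ℝ) (u0 : ℝ) : Prop :=
  (∀ s, 0 < s → s < u0 → f s < 0) ∧ (∀ s, u0 < s → 0 < f s)

/-- the constant `C_a`. -/
def Ca (a : ℝ → ℝ) : ℝ :=
  max ((a 1 / a 0) * Real.exp (∫ x in (0:ℝ)..1, max (-deriv a x) 0 / a x))
      ((a 0 / a 1) * Real.exp (∫ x in (0:ℝ)..1, max (deriv a x) 0 / a x))

/-- assumption `(f_ap)`, with the value `ū` made explicit. -/
def Fap (a f : ℝ → ℝ) (u0 ubar : ℝ) : Prop :=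
  u0 < ubar ∧ (∫ s in u0..ubar, f s) = Ca a * ∫ s in u0..(0:ℝ), f s

/-- assumption `(f_ap)'`. -/
def Fap' (a f : ℝ → ℝ) : Prop :=
  (∫ x in (0:ℝ)..1, a x) * sSup ((fun s => max (-f s) 0) '' Ici 0) < 1

/-- classical solution of the approximated Neumann problem `(Pₙ)`. -/
def IsPnSol (a f : ℝ → ℝ) (n : ℕ) (u : ℝ → ℝ) : Prop :=
  ContDiff ℝ 2 u ∧ (∀ x ∈ Ioo (0:ℝ) 1, 0 < u x) ∧
  deriv u 0 = 0 ∧ deriv u 1 = 0 ∧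
  ∀ x ∈ Ioo (0:ℝ) 1, -deriv (fun y => phiN n (deriv u y)) x = a x * f (u x)

/-- classical solution of the prescribed mean curvature Neumann problem `(P)`. -/
def IsPSol (a f : ℝ → ℝ) (u : ℝ → ℝ) : Prop :=
  ContDiff ℝ 2 u ∧ (∀ x ∈ Ioo (0:ℝ) 1, 0 < u x) ∧
  deriv u 0 = 0 ∧ deriv u 1 = 0 ∧
  ∀ x ∈ Ioo (0:ℝ) 1, -deriv (fun y => phi (deriv u y)) x = a x * f (u x)

/-- solution of the Cauchy problem with initial datum `d`. -/
def IsCauchySol (a f : ℝ → ℝ) (n : ℕ) (d : ℝ) (u : ℝ → ℝ) : Prop :=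
  ContDiff ℝ 2 u ∧ u 0 = d ∧ deriv u 0 = 0 ∧
  ∀ x ∈ Ioo (0:ℝ) 1, -deriv (fun y => phiN n (deriv u y)) x = a x * fhat f (u x)

/-- `θ` is a (clockwise) angular variable for `(u - u0, φₙ(u'))` around `(u0,0)`. -/
def IsAngle (n : ℕ) (u0 : ℝ) (u θ : ℝ → ℝ) : Prop :=
  ContinuousOn θ (Icc 0 1) ∧
  ∀ x ∈ Icc (0:ℝ) 1,
    u x - u0 = Real.sqrt ((u x - u0) ^ 2 + phiN n (deriv u x) ^ 2) * Real.cos (θ x) ∧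
    phiN n (deriv u x) = -(Real.sqrt ((u x - u0) ^ 2 + phiN n (deriv u x) ^ 2) * Real.sin (θ x))

/-- non-constant on `(0,1)`. -/
def Nonconstant (u : ℝ → ℝ) : Prop := ∃ x ∈ Ioo (0:ℝ) 1, ∃ y ∈ Ioo (0:ℝ) 1, u x ≠ u y

/-- the set of points of `(0,1)` where `u` takes the value `u0`. -/
def zeroSet (u : ℝ → ℝ) (u0 : ℝ) : Set ℝ := {x | x ∈ Ioo (0:ℝ) 1 ∧ u x = u0}

/-- the hypothesis `f'(u0) > λ_{k+1}`: there is `λ̄ < f'(u0)` admitting a nontrivial Neumann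
eigenfunction of `-w'' = λ̄ a w` with exactly `k` zeros in `(0,1)`. -/
def EigenHyp (a f : ℝ → ℝ) (u0 : ℝ) (k : ℕ) : Prop :=
  ∃ lam : ℝ, ∃ w : ℝ → ℝ, lam < deriv f u0 ∧ ContDiff ℝ 2 w ∧
    (∃ x ∈ Icc (0:ℝ) 1, w x ≠ 0) ∧
    (∀ x ∈ Ioo (0:ℝ) 1, -deriv (deriv w) x = lam * a x * w x) ∧
    deriv w 0 = 0 ∧ deriv w 1 = 0 ∧ (zeroSet w 0).ncard = k

/-- the functional `J(v) = ∫₀¹ √(1+|Dv|²)`. -/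
def Jfun (v : ℝ → ℝ) : ℝ :=
  sSup { r : ℝ | ∃ w₁ w₂ : ℝ → ℝ, ContDiff ℝ 1 w₁ ∧ ContDiff ℝ 1 w₂ ∧
    tsupport w₁ ⊆ Ioo 0 1 ∧ tsupport w₂ ⊆ Ioo 0 1 ∧
    (∀ x, w₁ x ^ 2 + w₂ x ^ 2 ≤ 1) ∧
    r = ∫ x in Ioo (0:ℝ) 1, (v x * deriv w₁ x + w₂ x) }

/-- BV-solution of the Neumann problem `(P)`. -/
def IsBVSol (a f : ℝ → ℝ) (u : ℝ → ℝ) : Prop :=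
  BoundedVariationOn u (Ioo 0 1) ∧ (∀ x ∈ Ioo (0:ℝ) 1, 0 ≤ u x) ∧
  ∀ v : ℝ → ℝ, BoundedVariationOn v (Ioo 0 1) →
    Jfun u + ∫ x in Ioo (0:ℝ) 1, a x * f (u x) * (v x - u x) ≤ Jfun v

/-- `u - u0` changes sign at `z`. -/
def ChangesSign (u : ℝ → ℝ) (u0 z : ℝ) : Prop :=
  ∃ δ > (0:ℝ), ((∀ x ∈ Ioo (z - δ) z, u x < u0) ∧ (∀ x ∈ Ioo z (z + δ), u0 < u x)) ∨
           ((∀ x ∈ Ioo (z - δ) z, u0 < u x) ∧ (∀ x ∈ Ioo z (z + δ), u x < u0))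

/-- the energy `Eₙ` along a solution of `(Pₙ)`. -/
def EnergyN (a f : ℝ → ℝ) (u0 : ℝ) (n : ℕ) (u : ℝ → ℝ) (x : ℝ) : ℝ :=
  deriv u x * phiN n (deriv u x) - PhiNBig n (deriv u x) + a x * Fprim f u0 (u x)

/-- the energy `ℰ` of `u` extends to a continuous function on `[0,1]`. -/
def HasContinuousEnergy (a f : ℝ → ℝ) (u0 : ℝ) (u : ℝ → ℝ) : Prop :=
  ∃ E : ℝ → ℝ, ContinuousOn E (Icc 0 1) ∧
    ∀ x ∈ Ioo (0:ℝ) 1, ContinuousAt u x →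
      (DifferentiableAt ℝ u x →
        E x = 1 - 1 / Real.sqrt (1 + deriv u x ^ 2) + a x * Fprim f u0 (u x)) ∧
      (¬ DifferentiableAt ℝ u x → E x = 1 + a x * Fprim f u0 (u x))

/-- the oscillatory structure of the BV-solutions of Theorem 1.1: `m` generalized
intersections with `u0`, with starting sign `σ` (`σ = 1` for case (I), `σ = -1` for case (II)). -/
def OscStructure (u0 : ℝ) (u : ℝ → ℝ) (m : ℕ) (σ : ℝ) : Prop :=
  ∃ x : ℕ → ℝ,
    x 0 = 0 ∧ x (m + 1) = 1 ∧ (∀ i ≤ m, x i < x (i + 1)) ∧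
    ContDiffOn ℝ 2 u (Ico 0 (x 1)) ∧ ContDiffOn ℝ 2 u (Ioc (x m) 1) ∧
    (∀ i, 1 ≤ i → i + 1 ≤ m → ContDiffOn ℝ 2 u (Ioo (x i) (x (i + 1)))) ∧
    derivWithin u (Icc 0 1) 0 = 0 ∧ derivWithin u (Icc 0 1) 1 = 0 ∧
    (∀ i ≤ m, ∀ y ∈ Ioo (x i) (x (i + 1)), 0 < σ * (-1 : ℝ) ^ (i + 1) * (u y - u0)) ∧
    ∀ i, 1 ≤ i → i ≤ m →
      (u (x i) = u0 ∧ ContDiffOn ℝ 2 u (Ioo (x (i - 1)) (x (i + 1)))) ∨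
      (∃ L R : ℝ, Tendsto u (𝓝[<] x i) (𝓝 L) ∧ Tendsto u (𝓝[>] x i) (𝓝 R) ∧
        (0 < σ * (-1 : ℝ) ^ (i + 1) →
          L ≤ u0 ∧ u0 ≤ R ∧ Tendsto (deriv u) (𝓝[<] x i) atTop ∧
            Tendsto (deriv u) (𝓝[>] x i) atTop) ∧
        (σ * (-1 : ℝ) ^ (i + 1) < 0 →
          R ≤ u0 ∧ u0 ≤ L ∧ Tendsto (deriv u) (𝓝[<] x i) atBot ∧
            Tendsto (deriv u) (𝓝[>] x i) atBot))

section Aux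

lemma sq1pos (s : ℝ) : 0 < 1 + s ^ 2 := by positivity
lemma sqrt1_pos (s : ℝ) : 0 < Real.sqrt (1 + s ^ 2) := Real.sqrt_pos.2 (sq1pos s)
lemma sqrt1_sq (s : ℝ) : Real.sqrt (1 + s ^ 2) ^ 2 = 1 + s ^ 2 := Real.sq_sqrt (sq1pos s).le
lemma phi_zero' : phi 0 = 0 := by simp [phi]
lemma phiD_pos (s : ℝ) : 0 < phiD s := div_pos one_pos (pow_pos (sqrt1_pos s) 3)
lemma phi_nonneg {s : ℝ} (h : 0 ≤ s) : 0 ≤ phi s := div_nonneg h (sqrt1_pos s).le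
lemma phi_neg' (s : ℝ) : phi (-s) = - phi s := by simp [phi, neg_div]
lemma phiD_even (s : ℝ) : phiD (-s) = phiD s := by simp [phiD]

lemma phiN_zero (n : ℕ) : phiN n 0 = 0 := by
  have h1 : ¬ ((n:ℝ) < 0) := not_lt.2 (Nat.cast_nonneg n)
  have h2 : ¬ ((0:ℝ) < -(n:ℝ)) := by simp
  simp [phiN, h1, h2, phi_zero']

lemma phiN_neg (n : ℕ) (s : ℝ) : phiN n (-s) = - phiN n s := by
  have hn : (0:ℝ) ≤ n := Nat.cast_nonneg n
  unfold phiN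
  rcases lt_trichotomy (n:ℝ) s with h | h | h
  · rw [if_neg (by linarith), if_pos (by linarith), if_pos h]; ring
  · subst h
    rw [if_neg (by linarith), if_neg (by linarith), if_neg (lt_irrefl _),
      if_neg (by linarith), phi_neg']
  · rcases lt_trichotomy s (-(n:ℝ)) with h2 | h2 | h2
    · rw [if_pos (by linarith), if_neg (by linarith), if_pos h2]; ring
    · rw [h2, neg_neg]
      rw [if_neg (lt_irrefl _), if_neg (by linarith), if_neg (by linarith),
        if_neg (lt_irrefl _), phi_neg', neg_neg]
    · rw [if_neg (by linarith), if_neg (by linarith), if_neg (by linarith),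
        if_neg (by linarith), phi_neg']

lemma hasDerivAt_phi (s : ℝ) : HasDerivAt phi (phiD s) s := by
  have hg : HasDerivAt (fun t : ℝ => Real.sqrt (1 + t ^ 2)) (s / Real.sqrt (1 + s ^ 2)) s := by
    have h1 : HasDerivAt (fun t : ℝ => 1 + t ^ 2) (2 * s) s := by
      simpa using ((hasDerivAt_pow 2 s).const_add 1)
    have := (Real.hasDerivAt_sqrt (sq1pos s).ne').comp s h1
    refine this.congr_deriv ?_
    field_simp
  have h := (hasDerivAt_id s).div hg (sqrt1_pos s).ne'
  refine h.congr_deriv ?_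
  have h2 := sqrt1_sq s
  have h3 := (sqrt1_pos s).ne'
  simp only [phiD, id]
  field_simp
  nlinarith [sqrt1_sq s, sqrt1_pos s]

lemma continuous_phiD : Continuous phiD := by
  apply Continuous.div continuous_const
  · exact (Real.continuous_sqrt.comp (by continuity)).pow 3
  · intro s; exact pow_ne_zero 3 (sqrt1_pos s).ne'

lemma phiN_zero_eq (s : ℝ) : phiN 0 s = s := by
  have hphi0 : phi 0 = 0 := by simp [phi]
  have hD0 : phiD 0 = 1 := by simp [phiD]
  unfold phiN
  rcases lt_trichotomy (0:ℝ) s with h | h | h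
  · rw [if_pos (by exact_mod_cast h)]; push_cast; rw [hphi0, hD0]; ring
  · subst h; rw [if_neg (by simp), if_neg (by simp)]; simpa using hphi0
  · rw [if_neg (by push_cast; linarith), if_pos (by push_cast; linarith)]
    push_cast; rw [hphi0, hD0]; ring

lemma phiN_eq_phi {n : ℕ} {s : ℝ} (h1 : -(n:ℝ) ≤ s) (h2 : s ≤ (n:ℝ)) : phiN n s = phi s := by
  rw [phiN, if_neg (not_lt.2 h2), if_neg (not_lt.2 h1)]

lemma hasDerivAt_phiN (n : ℕ) (s : ℝ) :
    HasDerivAt (phiN n) (phiD (max (-(n:ℝ)) (min s (n:ℝ)))) s := by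
  have hn0 : (0:ℝ) ≤ (n:ℝ) := Nat.cast_nonneg n
  have hmm : -(n:ℝ) ≤ (n:ℝ) := by linarith
  have hg : ∀ x : ℝ, HasDerivAt (fun t => phi n + phiD n * (t - n)) (phiD n) x := by
    intro x
    simpa using (((hasDerivAt_id x).sub_const (n:ℝ)).const_mul (phiD n)).const_add (phi n)
  have hgl : ∀ x : ℝ, HasDerivAt (fun t => -phi n + phiD n * (t + n)) (phiD n) x := by
    intro x
    simpa using (((hasDerivAt_id x).add_const (n:ℝ)).const_mul (phiD n)).const_add (-phi n)
  have key : HasDerivAt (phiN n) (phiD n) n := by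
    rcases Nat.eq_zero_or_pos n with rfl | hn
    · have he : phiN 0 = fun s : ℝ => s := funext phiN_zero_eq
      have hd : phiD ((0:ℕ):ℝ) = 1 := by simp [phiD]
      rw [he, hd]
      exact hasDerivAt_id' _
    · have hnpos : (0:ℝ) < n := by exact_mod_cast hn
      have hleft : HasDerivWithinAt (phiN n) (phiD n) (Iic (n:ℝ)) n := by
        have hphi : HasDerivWithinAt phi (phiD n) (Iic (n:ℝ)) n :=
          (hasDerivAt_phi n).hasDerivWithinAt
        refine hphi.congr_of_eventuallyEq ?_ (phiN_eq_phi (by linarith) le_rfl)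
        have hmem : Iic (n:ℝ) ∩ Ioi (-(n:ℝ)) ∈ 𝓝[Iic (n:ℝ)] (n:ℝ) :=
          inter_mem_nhdsWithin _ (Ioi_mem_nhds (by linarith))
        exact Filter.eventuallyEq_of_mem hmem fun y hy => phiN_eq_phi hy.2.le hy.1
      have hright : HasDerivWithinAt (phiN n) (phiD n) (Ici (n:ℝ)) n := by
        have hgw : HasDerivWithinAt (fun t => phi n + phiD n * (t - n)) (phiD n)
            (Ici (n:ℝ)) n := (hg n).hasDerivWithinAt
        refine hgw.congr (fun y hy => ?_) ?_
        · rcases eq_or_lt_of_le (mem_Ici.1 hy) with h | h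
          · rw [← h, phiN_eq_phi hmm le_rfl]; ring_nf
          · rw [phiN, if_pos h]
        · rw [phiN_eq_phi hmm le_rfl]; ring_nf
      have := hleft.union hright
      rw [Iic_union_Ici] at this
      exact this.hasDerivAt (by simp)
  have keyneg : HasDerivAt (phiN n) (phiD n) (-(n:ℝ)) := by
    have h1 : HasDerivAt (fun t : ℝ => phiN n (-t)) (phiD n * (-1)) (-(n:ℝ)) := by
      have := HasDerivAt.comp_of_eq (x := -(n:ℝ)) (h₂ := phiN n) (h := fun t : ℝ => -t)
        key (hasDerivAt_neg (-(n:ℝ))) (by ring)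
      simpa [Function.comp_def] using this
    have h2 : HasDerivAt (fun t : ℝ => -phiN n (-t)) (phiD n) (-(n:ℝ)) := by
      exact h1.neg.congr_deriv (by ring)
    have he : (fun t : ℝ => -phiN n (-t)) = phiN n := by
      funext t; rw [phiN_neg]; ring
    rwa [he] at h2
  rcases lt_trichotomy (n:ℝ) s with h | h | h
  · have hc : max (-(n:ℝ)) (min s (n:ℝ)) = (n:ℝ) := by
      rw [min_eq_right h.le, max_eq_right hmm]
    rw [hc]
    refine (hg s).congr_of_eventuallyEq ?_
    exact Filter.eventuallyEq_of_mem (Ioi_mem_nhds h) fun y hy => by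
      rw [phiN, if_pos (mem_Ioi.1 hy)]
  · subst h
    have hc : max (-(n:ℝ)) (min (n:ℝ) (n:ℝ)) = (n:ℝ) := by rw [min_self, max_eq_right hmm]
    rwa [hc]
  · rcases lt_trichotomy s (-(n:ℝ)) with h2 | h2 | h2
    · have hc : max (-(n:ℝ)) (min s (n:ℝ)) = -(n:ℝ) := by
        rw [min_eq_left (by linarith), max_eq_left h2.le]
      rw [hc, ← neg_neg (n:ℝ), phiD_even, neg_neg]
      refine (hgl s).congr_of_eventuallyEq ?_
      refine Filter.eventuallyEq_of_mem (Iio_mem_nhds h2) fun y hy => ?_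
      have hy' : y < -(n:ℝ) := mem_Iio.1 hy
      rw [phiN, if_neg (not_lt.2 (by linarith : y ≤ (n:ℝ))), if_pos hy']
    · subst h2
      have hc : max (-(n:ℝ)) (min (-(n:ℝ)) (n:ℝ)) = -(n:ℝ) := by
        rw [min_eq_left hmm, max_self]
      rw [hc, ← neg_neg (n:ℝ), phiD_even, neg_neg]
      exact keyneg
    · have hc : max (-(n:ℝ)) (min s (n:ℝ)) = s := by
        rw [min_eq_left h.le, max_eq_right h2.le]
      rw [hc]
      refine (hasDerivAt_phi s).congr_of_eventuallyEq ?_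
      have hmem : Ioo (-(n:ℝ)) (n:ℝ) ∈ 𝓝 s := Ioo_mem_nhds h2 h
      exact Filter.eventuallyEq_of_mem hmem fun y hy => phiN_eq_phi hy.1.le hy.2.le

lemma phi_le {c t : ℝ} (hc0 : 0 ≤ c) (hc1 : c < 1) (ht : 0 ≤ t) (h : phi t ≤ c) :
    t ≤ c / Real.sqrt (1 - c ^ 2) := by
  have hg := sqrt1_pos t
  have hg2 := sqrt1_sq t
  have hr : 0 < Real.sqrt (1 - c ^ 2) := Real.sqrt_pos.2 (by nlinarith)
  have hr2 : Real.sqrt (1 - c ^ 2) ^ 2 = 1 - c ^ 2 := Real.sq_sqrt (by nlinarith)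
  have h' : t ≤ c * Real.sqrt (1 + t ^ 2) := by
    rw [phi, div_le_iff₀ hg] at h; linarith
  rw [le_div_iff₀ hr]
  nlinarith [mul_nonneg ht hr.le, sq_nonneg (t * Real.sqrt (1 - c ^ 2) - c),
    sq_nonneg (t * Real.sqrt (1 - c ^ 2) + c), mul_pos hg hr]

lemma phiN_le {c : ℝ} (hc0 : 0 ≤ c) (hc1 : c < 1) (n : ℕ) {s : ℝ} (hs : 0 ≤ s)
    (h : phiN n s ≤ c) :
    s ≤ c / Real.sqrt (1 - c ^ 2) +
      (1 + (c / Real.sqrt (1 - c ^ 2)) ^ 2) *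
        Real.sqrt (1 + (c / Real.sqrt (1 - c ^ 2)) ^ 2) := by
  set K := c / Real.sqrt (1 - c ^ 2) with hK
  have hrpos : 0 < Real.sqrt (1 - c ^ 2) := Real.sqrt_pos.2 (by nlinarith)
  have hK0 : 0 ≤ K := div_nonneg hc0 hrpos.le
  have hKs : 0 ≤ Real.sqrt (1 + K ^ 2) := (sqrt1_pos K).le
  have hn0 : (0:ℝ) ≤ (n:ℝ) := Nat.cast_nonneg n
  rw [phiN] at h
  by_cases h1 : (n:ℝ) < s
  · rw [if_pos h1] at h
    have hDpos := phiD_pos (n:ℝ)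
    have hphin : phi n ≤ c := by nlinarith [phi_nonneg hn0]
    have hnK : (n:ℝ) ≤ K := phi_le hc0 hc1 hn0 hphin
    have h2 : phiD n * (s - n) ≤ 1 := by nlinarith [phi_nonneg hn0]
    have hgn := sqrt1_pos (n:ℝ)
    have h3 : s - n ≤ (Real.sqrt (1 + (n:ℝ) ^ 2)) ^ 3 := by
      rw [phiD] at h2
      rw [div_mul_eq_mul_div, div_le_one (pow_pos hgn 3)] at h2
      linarith
    have h4 : Real.sqrt (1 + (n:ℝ) ^ 2) ≤ Real.sqrt (1 + K ^ 2) :=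
      Real.sqrt_le_sqrt (by nlinarith)
    have h5 : (Real.sqrt (1 + (n:ℝ) ^ 2)) ^ 3 ≤ (Real.sqrt (1 + K ^ 2)) ^ 3 :=
      pow_le_pow_left₀ hgn.le h4 3
    have h6 : (Real.sqrt (1 + K ^ 2)) ^ 3 = (1 + K ^ 2) * Real.sqrt (1 + K ^ 2) := by
      rw [pow_succ, sqrt1_sq]
    linarith
  · rw [if_neg h1] at h
    rw [if_neg (by intro hc; exact absurd (lt_of_lt_of_le hc (by linarith)) (not_lt.2 hs))] at h
    have := phi_le hc0 hc1 hs h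
    nlinarith [mul_nonneg (by nlinarith : (0:ℝ) ≤ 1 + K ^ 2) hKs]

lemma phiN_abs_le {c : ℝ} (hc0 : 0 ≤ c) (hc1 : c < 1) (n : ℕ) {s : ℝ}
    (h : |phiN n s| ≤ c) :
    |s| ≤ c / Real.sqrt (1 - c ^ 2) +
      (1 + (c / Real.sqrt (1 - c ^ 2)) ^ 2) *
        Real.sqrt (1 + (c / Real.sqrt (1 - c ^ 2)) ^ 2) := by
  rcases le_total 0 s with hs | hs
  · rw [abs_of_nonneg hs]
    exact phiN_le hc0 hc1 n hs (le_trans (le_abs_self _) h)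
  · rw [abs_of_nonpos hs]
    refine phiN_le hc0 hc1 n (by linarith) ?_
    rw [phiN_neg]
    exact le_trans (neg_le_abs _) h

end Aux

theorem statement12 (a f : ℝ → ℝ) (u0 : ℝ)
    (ha : ContDiff ℝ 1 a) (hapos : ∀ x ∈ Icc (0:ℝ) 1, 0 < a x)
    (hf : ContDiffOn ℝ 1 f (Ici 0)) (hu0 : 0 < u0)
    (hfeq : Feq f u0) (hfsgn : Fsgn f u0)
    (hap' : Fap' a f) :
    ∃ M > (0:ℝ), ∀ (n : ℕ) (u : ℝ → ℝ), IsPnSol a f n u →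
      0 < sInf (u '' Icc (0:ℝ) 1) → sInf (u '' Icc (0:ℝ) 1) < u0 →
      (∫ x in (0:ℝ)..1, |u x|) + (∫ x in (0:ℝ)..1, |deriv u x|) ≤ M := by
  classical
  -- the constant S = sup of f⁻ on [0,∞)
  set fm : ℝ → ℝ := fun s => max (-f s) 0 with hfm
  set S : ℝ := sSup (fm '' Ici 0) with hSdef
  -- S is a genuine supremum
  have hfmcont : ContinuousOn fm (Icc 0 u0) :=
    (continuous_id.max continuous_const).comp_continuousOn
      (((hf.continuousOn).mono (fun t ht => ht.1)).neg)
  obtain ⟨B, hB⟩ := (isCompact_Icc.image_of_continuousOn hfmcont).bddAbove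
  have hbdd : BddAbove (fm '' Ici 0) := by
    refine ⟨max B 0, ?_⟩
    rintro y ⟨t, ht, rfl⟩
    rcases le_total t u0 with h | h
    · exact le_max_of_le_left (hB (mem_image_of_mem fm ⟨ht, h⟩))
    · rcases eq_or_lt_of_le h with h' | h'
      · rw [← h']
        simp [hfm, hfeq.2]
      · have : 0 < f t := hfsgn.2 t h'
        simp only [hfm]
        rw [max_eq_right (by linarith)]
        exact le_max_right _ _
  have hS0 : 0 ≤ S := by
    have : fm u0 ∈ fm '' Ici 0 := mem_image_of_mem fm hu0.le
    have h0 : fm u0 = 0 := by simp [hfm, hfeq.2]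
    rw [← h0]
    exact le_csSup hbdd this
  have hfS : ∀ t : ℝ, 0 ≤ t → -S ≤ f t ∧ -f t ≤ S := by
    intro t ht
    have : fm t ≤ S := le_csSup hbdd (mem_image_of_mem fm ht)
    constructor
    · have := le_max_left (-f t) 0
      skip
      linarith [le_max_left (-f t) (0:ℝ)]
    · linarith [le_max_left (-f t) (0:ℝ)]
  -- the constant c
  set c : ℝ := (∫ x in (0:ℝ)..1, a x) * S with hcdef
  have hc1 : c < 1 := hap'
  have haint : ∀ p q : ℝ, IntervalIntegrable a volume p q :=
    fun p q => (ha.continuous).intervalIntegrable p q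
  have hc0 : 0 ≤ c :=
    mul_nonneg (intervalIntegral.integral_nonneg zero_le_one fun x hx => (hapos x hx).le) hS0
  -- the constants K, K', M
  set K : ℝ := c / Real.sqrt (1 - c ^ 2) with hKdef
  have hrpos : 0 < Real.sqrt (1 - c ^ 2) := Real.sqrt_pos.2 (by nlinarith)
  have hK0 : 0 ≤ K := div_nonneg hc0 hrpos.le
  set K' : ℝ := K + (1 + K ^ 2) * Real.sqrt (1 + K ^ 2) with hK'def
  have hK'0 : 0 ≤ K' := by
    have := (sqrt1_pos K).le
    nlinarith
  refine ⟨u0 + 2 * K' + 1, by linarith, ?_⟩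
  intro n u hsol hmin_pos hmin_lt
  obtain ⟨hu, hupos', hd0, hd1, hode⟩ := hsol
  have hu1 : ContDiff ℝ 1 u := hu.of_le one_le_two
  have hud : Differentiable ℝ u := hu.differentiable two_ne_zero
  have hw1 : ContDiff ℝ 1 (deriv u) := by
    have h2 : ContDiff ℝ (1 + 1) u := by exact_mod_cast hu
    exact (contDiff_succ_iff_deriv.mp h2).2.2
  have hwc : Continuous (deriv u) := hw1.continuous
  have hwd : Differentiable ℝ (deriv u) := hw1.differentiable one_ne_zero
  have hwdc : Continuous (deriv (deriv u)) := hw1.continuous_deriv le_rfl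
  -- the minimum point
  obtain ⟨x₀, hx₀mem, hx₀min⟩ :=
    isCompact_Icc.exists_isMinOn (nonempty_Icc.2 zero_le_one) (hu.continuous.continuousOn)
  have hsInf : sInf (u '' Icc (0:ℝ) 1) = u x₀ := by
    refine IsLeast.csInf_eq ⟨mem_image_of_mem u hx₀mem, ?_⟩
    rintro y ⟨t, ht, rfl⟩
    exact hx₀min ht
  rw [hsInf] at hmin_pos hmin_lt
  have hupos : ∀ t ∈ Icc (0:ℝ) 1, 0 < u t := fun t ht => lt_of_lt_of_le hmin_pos (hx₀min ht)
  -- continuity of g = a ⬝ f ∘ u on [0,1]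
  set g : ℝ → ℝ := fun t => a t * f (u t) with hgdef
  have hgc : ContinuousOn g (Icc 0 1) := by
    intro t ht
    have hfc : ContinuousAt f (u t) := by
      have h1 : ContinuousWithinAt f (Ici 0) (u t) := hf.continuousOn (u t) (hupos t ht).le
      exact h1.continuousAt (Ici_mem_nhds (hupos t ht))
    exact ((ha.continuous.continuousAt).mul (hfc.comp hu.continuous.continuousAt)).continuousWithinAt
  have hgint : ∀ p q, p ∈ Icc (0:ℝ) 1 → q ∈ Icc (0:ℝ) 1 → IntervalIntegrable g volume p q := by
    intro p q hp hq
    refine (hgc.mono ?_).intervalIntegrable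
    intro t ht
    rcases mem_uIcc.1 ht with h | h
    · exact ⟨le_trans hp.1 h.1, le_trans h.2 hq.2⟩
    · exact ⟨le_trans hq.1 h.1, le_trans h.2 hp.2⟩
  -- the derivative of v = φₙ ∘ u'
  set G : ℝ → ℝ := fun x => phiD (max (-(n:ℝ)) (min (deriv u x) (n:ℝ))) * deriv (deriv u) x
    with hGdef
  have hvG : ∀ x : ℝ, HasDerivAt (fun y => phiN n (deriv u y)) (G x) x := by
    intro x
    exact (hasDerivAt_phiN n (deriv u x)).comp x (hwd x).hasDerivAt
  have hGcont : Continuous G := by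
    refine Continuous.mul ?_ hwdc
    exact continuous_phiD.comp (continuous_const.max (hwc.min continuous_const))
  have hftc : ∀ p q : ℝ, ∫ x in p..q, G x = phiN n (deriv u q) - phiN n (deriv u p) := by
    intro p q
    exact intervalIntegral.integral_eq_sub_of_hasDerivAt (fun x _ => hvG x)
      (hGcont.intervalIntegrable p q)
  -- G = -g a.e. on subintervals of [0,1]
  have hcongr : ∀ p q : ℝ, p ∈ Icc (0:ℝ) 1 → q ∈ Icc (0:ℝ) 1 →
      ∫ x in p..q, G x = ∫ x in p..q, (-g x) := by
    intro p q hp hq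
    refine intervalIntegral.integral_congr_ae ?_
    have h1 : ∀ᵐ x : ℝ, x ≠ 0 ∧ x ≠ 1 := by
      have h0 : ∀ᵐ x : ℝ, x ≠ 0 := by
        rw [MeasureTheory.ae_iff]
        simpa using Real.volume_singleton
      have h1' : ∀ᵐ x : ℝ, x ≠ 1 := by
        rw [MeasureTheory.ae_iff]
        simpa using Real.volume_singleton
      exact h0.and h1'
    filter_upwards [h1] with x hx hxI
    have hxIcc : x ∈ Icc (0:ℝ) 1 := by
      rcases mem_uIoc.1 hxI with h | h
      · exact ⟨le_trans hp.1 h.1.le, le_trans h.2 hq.2⟩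
      · exact ⟨le_trans hq.1 h.1.le, le_trans h.2 hp.2⟩
    have hxIoo : x ∈ Ioo (0:ℝ) 1 :=
      ⟨lt_of_le_of_ne hxIcc.1 (Ne.symm hx.1), lt_of_le_of_ne hxIcc.2 hx.2⟩
    have := hode x hxIoo
    have hd : deriv (fun y => phiN n (deriv u y)) x = G x := (hvG x).deriv
    rw [hd] at this
    simp only [hgdef]
    linarith
  -- values at the endpoints
  have hv0 : phiN n (deriv u 0) = 0 := by rw [hd0, phiN_zero]
  have hv1 : phiN n (deriv u 1) = 0 := by rw [hd1, phiN_zero]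
  have h0mem : (0:ℝ) ∈ Icc (0:ℝ) 1 := ⟨le_rfl, zero_le_one⟩
  have h1mem : (1:ℝ) ∈ Icc (0:ℝ) 1 := ⟨zero_le_one, le_rfl⟩
  have htotal : ∫ x in (0:ℝ)..1, g x = 0 := by
    have := hftc 0 1
    rw [hcongr 0 1 h0mem h1mem, hv0, hv1, intervalIntegral.integral_neg] at this
    linarith
  -- the integral of a over subintervals is at most the full one
  have habound : ∀ x : ℝ, x ∈ Icc (0:ℝ) 1 →
      (∫ t in (0:ℝ)..x, a t) ≤ (∫ t in (0:ℝ)..1, a t) ∧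
      (∫ t in x..(1:ℝ), a t) ≤ (∫ t in (0:ℝ)..1, a t) := by
    intro x hx
    have hsplit : (∫ t in (0:ℝ)..x, a t) + (∫ t in x..(1:ℝ), a t) = ∫ t in (0:ℝ)..1, a t :=
      intervalIntegral.integral_add_adjacent_intervals (haint 0 x) (haint x 1)
    have h1 : 0 ≤ ∫ t in (0:ℝ)..x, a t :=
      intervalIntegral.integral_nonneg hx.1 fun t ht => (hapos t ⟨ht.1, le_trans ht.2 hx.2⟩).le
    have h2 : 0 ≤ ∫ t in x..(1:ℝ), a t :=
      intervalIntegral.integral_nonneg hx.2 fun t ht => (hapos t ⟨le_trans hx.1 ht.1, ht.2⟩).le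
    constructor <;> linarith
  -- |φₙ(u'(x))| ≤ c on [0,1]
  have Habs : ∀ x ∈ Icc (0:ℝ) 1, |phiN n (deriv u x)| ≤ c := by
    intro x hx
    have hrep : phiN n (deriv u x) = -∫ t in (0:ℝ)..x, g t := by
      have := hftc 0 x
      rw [hcongr 0 x h0mem hx, hv0, intervalIntegral.integral_neg] at this
      linarith
    have hsplit : (∫ t in (0:ℝ)..x, g t) + (∫ t in x..(1:ℝ), g t) = ∫ t in (0:ℝ)..1, g t :=
      intervalIntegral.integral_add_adjacent_intervals (hgint 0 x h0mem hx) (hgint x 1 hx h1mem)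
    have hrep2 : phiN n (deriv u x) = ∫ t in x..(1:ℝ), g t := by
      rw [hrep]; rw [htotal] at hsplit; linarith
    rw [abs_le]
    constructor
    · rw [hrep2]
      have hlow : ∀ t ∈ Icc x (1:ℝ), a t * (-S) ≤ g t := by
        intro t ht
        have htI : t ∈ Icc (0:ℝ) 1 := ⟨le_trans hx.1 ht.1, ht.2⟩
        have := (hfS (u t) (hupos t htI).le).1
        exact mul_le_mul_of_nonneg_left this (hapos t htI).le
      have hmono := intervalIntegral.integral_mono_on hx.2
        ((haint x 1).mul_const (-S)) (hgint x 1 hx h1mem) hlow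
      have heval : (∫ t in x..(1:ℝ), a t * (-S)) = (∫ t in x..(1:ℝ), a t) * (-S) :=
        intervalIntegral.integral_mul_const _ _
      have hle := (habound x hx).2
      have : (∫ t in x..(1:ℝ), a t) * (-S) ≥ -c := by
        rw [hcdef]
        have h1 : (∫ t in x..(1:ℝ), a t) * S ≤ (∫ t in (0:ℝ)..1, a t) * S :=
          mul_le_mul_of_nonneg_right hle hS0
        nlinarith
      linarith
    · rw [hrep]
      have hup : ∀ t ∈ Icc (0:ℝ) x, -g t ≤ a t * S := by
        intro t ht
        have htI : t ∈ Icc (0:ℝ) 1 := ⟨ht.1, le_trans ht.2 hx.2⟩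
        have := (hfS (u t) (hupos t htI).le).2
        have h2 : a t * (-f (u t)) ≤ a t * S :=
          mul_le_mul_of_nonneg_left this (hapos t htI).le
        simp only [hgdef]
        linarith
      have hmono := intervalIntegral.integral_mono_on hx.1
        ((hgint 0 x h0mem hx).neg) ((haint 0 x).mul_const S) hup
      have heval : (∫ t in (0:ℝ)..x, a t * S) = (∫ t in (0:ℝ)..x, a t) * S :=
        intervalIntegral.integral_mul_const _ _
      have hle := (habound x hx).1
      have h1 : (∫ t in (0:ℝ)..x, a t) * S ≤ (∫ t in (0:ℝ)..1, a t) * S :=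
        mul_le_mul_of_nonneg_right hle hS0
      have hneg : (∫ t in (0:ℝ)..x, -g t) = -∫ t in (0:ℝ)..x, g t :=
        intervalIntegral.integral_neg
      simp only [Pi.neg_apply] at hmono
      rw [hcdef]
      linarith [hmono, hneg, heval, h1]
  -- |u'| ≤ K' on [0,1]
  have Hw : ∀ x ∈ Icc (0:ℝ) 1, |deriv u x| ≤ K' := by
    intro x hx
    have := phiN_abs_le hc0 hc1 n (Habs x hx)
    rw [hK'def, hKdef]
    exact this
  -- ∫ |u'| ≤ K'
  have Int2 : (∫ x in (0:ℝ)..1, |deriv u x|) ≤ K' := by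
    have h1 : (∫ x in (0:ℝ)..1, |deriv u x|) ≤ ∫ x in (0:ℝ)..1, K' := by
      refine intervalIntegral.integral_mono_on zero_le_one ?_ intervalIntegrable_const Hw
      exact (hwc.abs).intervalIntegrable 0 1
    simpa using h1
  -- u ≤ u0 + K' on [0,1]
  have Hu : ∀ x ∈ Icc (0:ℝ) 1, u x ≤ u0 + K' := by
    intro x hx
    have hftcu : ∫ t in x₀..x, deriv u t = u x - u x₀ :=
      intervalIntegral.integral_eq_sub_of_hasDerivAt
        (fun t _ => (hud t).hasDerivAt) (hwc.intervalIntegrable x₀ x)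
    have hbound : ‖∫ t in x₀..x, deriv u t‖ ≤ K' * |x - x₀| := by
      refine intervalIntegral.norm_integral_le_of_norm_le_const ?_
      intro t ht
      have htI : t ∈ Icc (0:ℝ) 1 := by
        rcases mem_uIoc.1 ht with h | h
        · exact ⟨le_trans hx₀mem.1 h.1.le, le_trans h.2 hx.2⟩
        · exact ⟨le_trans hx.1 h.1.le, le_trans h.2 hx₀mem.2⟩
      simpa using Hw t htI
    have habs : |x - x₀| ≤ 1 := by
      rw [abs_le]
      constructor <;> [linarith [hx.1, hx₀mem.2]; linarith [hx.2, hx₀mem.1]]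
    have : |u x - u x₀| ≤ K' := by
      rw [hftcu] at hbound
      calc |u x - u x₀| ≤ K' * |x - x₀| := hbound
        _ ≤ K' * 1 := mul_le_mul_of_nonneg_left habs hK'0
        _ = K' := mul_one K'
    have := (abs_le.1 this).2
    linarith
  -- ∫ |u| ≤ u0 + K'
  have Int1 : (∫ x in (0:ℝ)..1, |u x|) ≤ u0 + K' := by
    have h1 : (∫ x in (0:ℝ)..1, |u x|) ≤ ∫ x in (0:ℝ)..1, (u0 + K') := by
      refine intervalIntegral.integral_mono_on zero_le_one ?_ intervalIntegrable_const ?_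
      · exact (hu.continuous.abs).intervalIntegrable 0 1
      · intro x hx
        rw [abs_of_pos (hupos x hx)]
        exact Hu x hx
    simpa using h1
  linarith
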